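/- Let A ∈ B+(X) and let ℓ ≥ 1 be an integer. Suppose that sup_{x∈A} L(x,A) < 1 and sup_{x∈A} Σ_{n≥1} n^ℓ F^n(x,A) < ∞. Then sup_{x∈A} Σ_{n≥1} n^ℓ P^n(x,A) < ∞. -/

import Mathlib

open MeasureTheory ProbabilityTheory
open scoped ENNReal NNReal Classical

namespace MarkovTransience

variable {X : Type*} [MeasurableSpace X]

/-- `iterP P n x A` is the `n`-step transition probability `P^n(x, A)`. -/
noncomputable def iterP (P : Kernel X X) : ℕ → X → Set X → ℝ≥0∞
  | 0 => fun x A => A.indicator (fun _ => 1) x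
  | n + 1 => fun x A => ∫⁻ y, iterP P n y A ∂(P x)

/-- `retF P A n x` is `F^n(x, A) = P_x(τ_A = n)`, the probability that the first
return to `A` happens at time `n`. -/
noncomputable def retF (P : Kernel X X) (A : Set X) : ℕ → X → ℝ≥0∞
  | 0 => fun _ => 0
  | 1 => fun x => P x A
  | n + 2 => fun x => ∫⁻ y in Aᶜ, retF P A (n + 1) y ∂(P x)

/-- `retL P A x = L(x, A) = P_x(τ_A < ∞)`. -/
noncomputable def retL (P : Kernel X X) (A : Set X) (x : X) : ℝ≥0∞ :=
  ∑' n, retF P A n x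

/-- `retE P A r x = E_x[r(τ_A) 1_{τ_A < ∞}]`. -/
noncomputable def retE (P : Kernel X X) (A : Set X) (r : ℕ → ℝ≥0∞) (x : X) : ℝ≥0∞ :=
  ∑' n, r n * retF P A n x

/-- `hitE P A r x = E_x[r(σ_A) 1_{σ_A < ∞}]`, `σ_A` the first hitting time. -/
noncomputable def hitE (P : Kernel X X) (A : Set X) (r : ℕ → ℝ≥0∞) (x : X) : ℝ≥0∞ :=
  if x ∈ A then r 0 else retE P A r x

/-- `act P W x = PW(x) = ∫ W(y) P(x, dy)`. -/
noncomputable def act (P : Kernel X X) (W : X → ℝ≥0∞) (x : X) : ℝ≥0∞ :=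
  ∫⁻ y, W y ∂(P x)

/-- `ψ`-irreducibility: `ψ` is a nontrivial σ-finite measure such that every set of
positive `ψ`-measure is reached with positive probability from every starting point. -/
def IsIrreducibility (P : Kernel X X) (ψ : Measure X) : Prop :=
  ψ ≠ 0 ∧ SigmaFinite ψ ∧
    ∀ A : Set X, MeasurableSet A → 0 < ψ A → ∀ x, 0 < ∑' n, iterP P (n + 1) x A

/-- `ψ` is a maximal irreducibility measure for `P`. -/
def IsMaxIrreducibility (P : Kernel X X) (ψ : Measure X) : Prop :=
  IsIrreducibility P ψ ∧ ∀ ψ' : Measure X, IsIrreducibility P ψ' → ψ' ≪ ψ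

/-- `A ∈ B⁺(X)`: a measurable set of positive `ψ`-measure. -/
def InBPlus (ψ : Measure X) (A : Set X) : Prop :=
  MeasurableSet A ∧ 0 < ψ A

/-- A petite set. -/
def PetiteSet (P : Kernel X X) (A : Set X) : Prop :=
  ∃ (a : ℕ → ℝ≥0∞) (ν : Measure X), (∑' n, a n) = 1 ∧ ν ≠ 0 ∧
    ∀ x ∈ A, ∀ B : Set X, MeasurableSet B → ν B ≤ ∑' n, a n * iterP P (n + 1) x B

/-- The chain is transient. -/
def Transient (P : Kernel X X) (ψ : Measure X) : Prop :=
  IsMaxIrreducibility P ψ ∧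
    ∃ A : ℕ → Set X, (⋃ i, A i) = Set.univ ∧
      ∀ i, InBPlus ψ (A i) ∧ (⨆ x ∈ A i, ∑' n, iterP P (n + 1) x (A i)) < ⊤

/-- A uniformly geometric transient set. -/
def UnifGeomTransientSet (P : Kernel X X) (A : Set X) : Prop :=
  ∃ κ : ℝ≥0, 1 < κ ∧ (⨆ x ∈ A, ∑' n, (κ : ℝ≥0∞) ^ (n + 1) * iterP P (n + 1) x A) < ⊤

/-- The chain is geometrically transient. -/
def GeomTransient (P : Kernel X X) (ψ : Measure X) : Prop :=
  IsMaxIrreducibility P ψ ∧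
    ∃ (D : Set X) (A : ℕ → Set X), ψ D = 0 ∧ D ∪ (⋃ i, A i) = Set.univ ∧
      ∀ i, InBPlus ψ (A i) ∧ UnifGeomTransientSet P (A i)

/-- A uniformly `ℓ`-transient set. -/
def UnifAlgTransientSet (P : Kernel X X) (ℓ : ℕ) (A : Set X) : Prop :=
  (⨆ x ∈ A, ∑' n, ((n + 1 : ℕ) : ℝ≥0∞) ^ ℓ * iterP P (n + 1) x A) < ⊤

/-- The chain is algebraically (`ℓ`-)transient. -/
def AlgTransient (P : Kernel X X) (ψ : Measure X) (ℓ : ℕ) : Prop :=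
  IsMaxIrreducibility P ψ ∧
    ∃ (D : Set X) (A : ℕ → Set X), ψ D = 0 ∧ D ∪ (⋃ i, A i) = Set.univ ∧
      ∀ i, InBPlus ψ (A i) ∧ UnifAlgTransientSet P ℓ (A i)

/-- `lifeDist P x n = P_x(τ = n)` where `τ = sup{n : Φ_n ∈ X}` is the lifetime of the
(sub-stochastic) chain, so that `P_x(τ = n) = P^n(x, X) - P^{n+1}(x, X)`. -/
noncomputable def lifeDist (P : Kernel X X) (x : X) (n : ℕ) : ℝ≥0∞ :=
  iterP P n x Set.univ - iterP P (n + 1) x Set.univ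

/-- `lifeE P r x = E_x[r(τ)]` for the lifetime `τ` (on the event `τ < ∞`). -/
noncomputable def lifeE (P : Kernel X X) (r : ℕ → ℝ≥0∞) (x : X) : ℝ≥0∞ :=
  ∑' n, r n * lifeDist P x n

/-- The family `Λ` of normalized increasing submultiplicative rate functions. -/
def InLambda (r : ℕ → ℝ≥0) : Prop :=
  Monotone r ∧ r 0 = 1 ∧ (∀ n, 1 ≤ r n) ∧ ∀ m n, r (m + n) ≤ r m * r n

section Aux

variable (P : Kernel X X) (A : Set X)

/-- `retG P A W k x = E_x[W(Φ_{τ_A}) 1{τ_A = k+1}]`. -/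
noncomputable def retG (W : X → ℝ≥0∞) : ℕ → X → ℝ≥0∞
  | 0 => fun x => ∫⁻ y in A, W y ∂(P x)
  | k + 1 => fun x => ∫⁻ y in Aᶜ, retG W k y ∂(P x)

variable {P A}

lemma measurable_iterP [IsSFiniteKernel P] {B : Set X} (hB : MeasurableSet B) :
    ∀ n, Measurable fun x => iterP P n x B
  | 0 => by
      have : (fun x => iterP P 0 x B) = B.indicator (fun _ => (1 : ℝ≥0∞)) := rfl
      rw [this]; exact measurable_const.indicator hB
  | n + 1 => by
      have : (fun x => iterP P (n + 1) x B) = fun x => ∫⁻ y, iterP P n y B ∂(P x) := rfl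
      rw [this]; exact (measurable_iterP hB n).lintegral_kernel

lemma measurable_retF [IsSFiniteKernel P] (hA : MeasurableSet A) :
    ∀ n, Measurable (retF P A n)
  | 0 => measurable_const
  | 1 => P.measurable_coe hA
  | n + 2 => (measurable_retF hA (n + 1)).setLIntegral_kernel hA.compl

lemma measurable_retG [IsSFiniteKernel P] (hA : MeasurableSet A) {W : X → ℝ≥0∞}
    (hW : Measurable W) : ∀ k, Measurable (retG P A W k)
  | 0 => hW.setLIntegral_kernel hA
  | k + 1 => (measurable_retG hA hW k).setLIntegral_kernel hA.compl

/-- If `W ≤ c` on `A`, then `retG P A W k x ≤ c · F^{k+1}(x, A)`. -/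
lemma retG_le [IsSFiniteKernel P] (hA : MeasurableSet A) {W : X → ℝ≥0∞} {c : ℝ≥0∞}
    (h : ∀ y ∈ A, W y ≤ c) : ∀ k x, retG P A W k x ≤ c * retF P A (k + 1) x
  | 0, x => by
      have h1 : retG P A W 0 x = ∫⁻ y in A, W y ∂(P x) := rfl
      have h2 : retF P A 1 x = P x A := rfl
      calc ∫⁻ y in A, W y ∂(P x) ≤ ∫⁻ _ in A, c ∂(P x) := setLIntegral_mono measurable_const h
        _ = c * P x A := by rw [setLIntegral_const]
  | k + 1, x => by
      have h1 : retG P A W (k + 1) x = ∫⁻ y in Aᶜ, retG P A W k y ∂(P x) := rfl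
      have h2 : retF P A (k + 2) x = ∫⁻ y in Aᶜ, retF P A (k + 1) y ∂(P x) := rfl
      rw [h1, h2]
      calc ∫⁻ y in Aᶜ, retG P A W k y ∂(P x)
          ≤ ∫⁻ y in Aᶜ, c * retF P A (k + 1) y ∂(P x) :=
            lintegral_mono fun y => retG_le hA h k y
        _ = c * ∫⁻ y in Aᶜ, retF P A (k + 1) y ∂(P x) :=
            lintegral_const_mul c (measurable_retF hA (k + 1))

/-- Linearity of `retG` in `W` (finite sums with scalar coefficients). -/
lemma retG_sum_mul [IsSFiniteKernel P] (hA : MeasurableSet A) {ι : Type*} (s : Finset ι)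
    (c : ι → ℝ≥0∞) (W : ι → X → ℝ≥0∞) (hW : ∀ m, Measurable (W m)) :
    ∀ k x, retG P A (fun y => ∑ m ∈ s, c m * W m y) k x
      = ∑ m ∈ s, c m * retG P A (W m) k x
  | 0, x => by
      have h1 : retG P A (fun y => ∑ m ∈ s, c m * W m y) 0 x
          = ∫⁻ y in A, ∑ m ∈ s, c m * W m y ∂(P x) := rfl
      rw [h1, lintegral_finset_sum' s fun m _ => ((hW m).const_mul (c m)).aemeasurable]
      exact Finset.sum_congr rfl fun m _ => lintegral_const_mul (c m) (hW m)
  | k + 1, x => by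
      have h1 : retG P A (fun y => ∑ m ∈ s, c m * W m y) (k + 1) x
          = ∫⁻ y in Aᶜ, retG P A (fun y => ∑ m ∈ s, c m * W m y) k y ∂(P x) := rfl
      rw [h1]
      have : ∀ y, retG P A (fun y => ∑ m ∈ s, c m * W m y) k y
          = ∑ m ∈ s, c m * retG P A (W m) k y := fun y => retG_sum_mul hA s c W hW k y
      rw [lintegral_congr this,
        lintegral_finset_sum' s fun m _ => ((measurable_retG hA (hW m) k).const_mul (c m)).aemeasurable]
      exact Finset.sum_congr rfl fun m _ =>
        lintegral_const_mul (c m) (measurable_retG hA (hW m) k)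

/-- First-entrance decomposition: `P^{n+1}(x, A) = ∑_{k=0}^{n} G_{k}(x, P^{n-k}(·, A))`. -/
lemma iterP_eq_sum_retG [IsSFiniteKernel P] (hA : MeasurableSet A) :
    ∀ n x, iterP P (n + 1) x A
      = ∑ k ∈ Finset.range (n + 1), retG P A (fun y => iterP P (n - k) y A) k x
  | 0, x => by
      have h1 : iterP P 1 x A = ∫⁻ y, A.indicator (fun _ => (1 : ℝ≥0∞)) y ∂(P x) := rfl
      rw [h1, lintegral_indicator hA]
      have h2 : retG P A (fun y => iterP P 0 y A) 0 x
          = ∫⁻ y in A, A.indicator (fun _ => (1 : ℝ≥0∞)) y ∂(P x) := rfl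
      rw [Finset.sum_range_one, h2]
      exact (setLIntegral_congr_fun hA (fun y hy => by
        simp [Set.indicator_of_mem hy])).symm
  | n + 1, x => by
      have h1 : iterP P (n + 2) x A = ∫⁻ y, iterP P (n + 1) y A ∂(P x) := rfl
      rw [h1, ← lintegral_add_compl (fun y => iterP P (n + 1) y A) hA]
      have hcpl : ∫⁻ y in Aᶜ, iterP P (n + 1) y A ∂(P x)
          = ∑ k ∈ Finset.range (n + 1), retG P A (fun y => iterP P (n - k) y A) (k + 1) x := by
        rw [lintegral_congr fun y => iterP_eq_sum_retG hA n y,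
          lintegral_finset_sum' _ fun k _ =>
            (measurable_retG hA (measurable_iterP hA (n - k)) k).aemeasurable]
        rfl
      rw [hcpl, Finset.sum_range_succ' (fun k =>
        retG P A (fun y => iterP P (n + 1 - k) y A) k x) (n + 1)]
      have h0 : retG P A (fun y => iterP P (n + 1 - 0) y A) 0 x
          = ∫⁻ y in A, iterP P (n + 1) y A ∂(P x) := rfl
      rw [h0, add_comm]
      congr 1
      exact Finset.sum_congr rfl fun k _ => by rw [Nat.succ_sub_succ]

/-- Triangle reindexing for double sums. -/
lemma sum_triangle (f : ℕ → ℕ → ℝ≥0∞) :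
    ∀ N, ∑ n ∈ Finset.range N, ∑ k ∈ Finset.range (n + 1), f k (n - k)
      = ∑ k ∈ Finset.range N, ∑ m ∈ Finset.range (N - k), f k m
  | 0 => by simp
  | N + 1 => by
      have h1 : ∀ k ∈ Finset.range N, ∑ m ∈ Finset.range (N + 1 - k), f k m
          = ∑ m ∈ Finset.range (N - k), f k m + f k (N - k) := fun k hk => by
        have hk' : k < N := Finset.mem_range.mp hk
        rw [show N + 1 - k = (N - k) + 1 by omega, Finset.sum_range_succ]
      rw [Finset.sum_range_succ (fun n => ∑ k ∈ Finset.range (n + 1), f k (n - k)) N,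
        sum_triangle f N,
        Finset.sum_range_succ (fun k => ∑ m ∈ Finset.range (N + 1 - k), f k m) N,
        Finset.sum_congr rfl h1, Finset.sum_add_distrib,
        show N + 1 - N = 1 by omega, Finset.sum_range_one,
        Finset.sum_range_succ (fun k => f k (N - k)) N, show N - N = 0 by omega]
      ring

lemma iterP_le_univ : ∀ n x, iterP P n x A ≤ iterP P n x Set.univ
  | 0, x => by
      by_cases hx : x ∈ A
      · simp [iterP, Set.indicator_of_mem hx]
      · simp [iterP, Set.indicator_of_notMem hx]
  | n + 1, x => lintegral_mono fun y => iterP_le_univ n y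

lemma iterP_univ_le_one (hP : ∀ x, P x Set.univ ≤ 1) : ∀ n x, iterP P n x Set.univ ≤ 1
  | 0, x => by simp [iterP]
  | n + 1, x => by
      have h1 : iterP P (n + 1) x Set.univ = ∫⁻ y, iterP P n y Set.univ ∂(P x) := rfl
      rw [h1]
      calc ∫⁻ y, iterP P n y Set.univ ∂(P x) ≤ ∫⁻ _, 1 ∂(P x) :=
            lintegral_mono fun y => iterP_univ_le_one hP n y
        _ = P x Set.univ := by rw [lintegral_one]
        _ ≤ 1 := hP x

lemma iterP_le_one (hP : ∀ x, P x Set.univ ≤ 1) (n : ℕ) (x : X) : iterP P n x A ≤ 1 :=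
  (iterP_le_univ n x).trans (iterP_univ_le_one hP n x)

lemma ennreal_solve {a δ K : ℝ≥0∞} (hδ : δ < 1) (ha : a ≠ ⊤) (h : a ≤ δ * a + K) :
    a ≤ K / (1 - δ) := by
  have h1 : (1 : ℝ≥0∞) - δ ≠ 0 := by
    simp only [ne_eq, tsub_eq_zero_iff_le]; exact hδ.not_ge
  rw [ENNReal.le_div_iff_mul_le (Or.inl h1) (Or.inl (by
    exact ne_top_of_le_ne_top ENNReal.one_ne_top tsub_le_self))]
  have h2 : a * (1 - δ) = a * 1 - a * δ := by
    rw [mul_comm a (1 - δ), ENNReal.sub_mul fun _ _ => ha, one_mul, mul_comm, mul_one]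
  rw [h2, mul_one]
  rw [tsub_le_iff_right]
  calc a ≤ δ * a + K := h
    _ = K + a * δ := by ring

end Aux

section Main

variable {P : Kernel X X} {A : Set X}

/-- Partial sums of the `i`-th moment of occupation, uniformly over `A`. -/
noncomputable def Tsum (P : Kernel X X) (A : Set X) (i N : ℕ) : ℝ≥0∞ :=
  ⨆ x ∈ A, ∑ n ∈ Finset.range N, ((n + 1 : ℕ) : ℝ≥0∞) ^ i * iterP P (n + 1) x A

lemma key_bound [IsSFiniteKernel P] (hA : MeasurableSet A) (ℓ i N : ℕ) (hi : i ≤ ℓ) :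
    Tsum P A i N ≤
      ((if i = 0 then 1 else 0) + Tsum P A i N) * (⨆ x ∈ A, retL P A x)
        + ∑ j ∈ Finset.range i, (i.choose j : ℝ≥0∞)
            * ((if j = 0 then 1 else 0) + Tsum P A j N)
            * (⨆ x ∈ A, ∑' n, ((n + 1 : ℕ) : ℝ≥0∞) ^ ℓ * retF P A (n + 1) x) := by
  set δ := ⨆ x ∈ A, retL P A x with hδdef
  set M := ⨆ x ∈ A, ∑' n, ((n + 1 : ℕ) : ℝ≥0∞) ^ ℓ * retF P A (n + 1) x with hMdef
  set c : ℕ → ℝ≥0∞ := fun j => (if j = 0 then 1 else 0) + Tsum P A j N with hc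
  refine iSup₂_le fun x hx => ?_
  have hWm : ∀ m : ℕ, Measurable fun y => iterP P m y A := fun m => measurable_iterP hA m
  -- inner bound on occupation sums from points of `A`
  have hinner : ∀ (j s : ℕ), s ≤ N → ∀ y ∈ A,
      ∑ m ∈ Finset.range s, (m : ℝ≥0∞) ^ j * iterP P m y A ≤ c j := by
    intro j s hs y hy
    cases s with
    | zero => simpa using zero_le (c j)
    | succ t =>
      rw [Finset.sum_range_succ' (fun m => (m : ℝ≥0∞) ^ j * iterP P m y A) t]
      have h1 : ∑ m ∈ Finset.range t, ((m + 1 : ℕ) : ℝ≥0∞) ^ j * iterP P (m + 1) y A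
          ≤ Tsum P A j N := by
        have hsub : Finset.range t ⊆ Finset.range N := Finset.range_subset_range.mpr (by omega)
        refine le_trans (Finset.sum_le_sum_of_subset hsub) ?_
        exact le_biSup
          (fun y => ∑ n ∈ Finset.range N, ((n + 1 : ℕ) : ℝ≥0∞) ^ j * iterP P (n + 1) y A) hy
      have h0 : ((0 : ℕ) : ℝ≥0∞) ^ j * iterP P 0 y A ≤ if j = 0 then 1 else 0 := by
        by_cases hj : j = 0
        · subst hj
          simp [iterP, Set.indicator_of_mem hy]
        · simp [hj, zero_pow hj]
      calc ∑ m ∈ Finset.range t, ((m + 1 : ℕ) : ℝ≥0∞) ^ j * iterP P (m + 1) y A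
            + ((0 : ℕ) : ℝ≥0∞) ^ j * iterP P 0 y A
          ≤ Tsum P A j N + (if j = 0 then 1 else 0) := add_le_add h1 h0
        _ = c j := by rw [hc, add_comm]
  -- the pointwise bound fed into `retG_le`
  have hpoint : ∀ k, k ∈ Finset.range N → ∀ y ∈ A,
      ∑ m ∈ Finset.range (N - k), ((k + m + 1 : ℕ) : ℝ≥0∞) ^ i * iterP P m y A
        ≤ ∑ j ∈ Finset.range (i + 1),
            (i.choose j : ℝ≥0∞) * ((k + 1 : ℕ) : ℝ≥0∞) ^ (i - j) * c j := by
    intro k _ y hy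
    have hexp : ∀ m : ℕ, ((k + m + 1 : ℕ) : ℝ≥0∞) ^ i
        = ∑ j ∈ Finset.range (i + 1),
            (m : ℝ≥0∞) ^ j * ((k + 1 : ℕ) : ℝ≥0∞) ^ (i - j) * (i.choose j : ℝ≥0∞) := by
      intro m
      rw [show ((k + m + 1 : ℕ) : ℝ≥0∞) = (m : ℝ≥0∞) + ((k + 1 : ℕ) : ℝ≥0∞) by
        push_cast; ring, add_pow]
    calc ∑ m ∈ Finset.range (N - k), ((k + m + 1 : ℕ) : ℝ≥0∞) ^ i * iterP P m y A
        = ∑ j ∈ Finset.range (i + 1), (i.choose j : ℝ≥0∞) * ((k + 1 : ℕ) : ℝ≥0∞) ^ (i - j)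
            * ∑ m ∈ Finset.range (N - k), (m : ℝ≥0∞) ^ j * iterP P m y A := by
          simp_rw [hexp, Finset.sum_mul, Finset.mul_sum]
          rw [Finset.sum_comm]
          exact Finset.sum_congr rfl fun j _ => Finset.sum_congr rfl fun m _ => by ring
      _ ≤ ∑ j ∈ Finset.range (i + 1),
            (i.choose j : ℝ≥0∞) * ((k + 1 : ℕ) : ℝ≥0∞) ^ (i - j) * c j :=
          Finset.sum_le_sum fun j _ =>
            mul_le_mul_right (hinner j (N - k) (by omega) y hy) _
  -- the sums of `retF` against `δ` and `M`
  have hδb : ∑ k ∈ Finset.range N, retF P A (k + 1) x ≤ δ := by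
    calc ∑ k ∈ Finset.range N, retF P A (k + 1) x
        ≤ ∑' k, retF P A (k + 1) x := ENNReal.sum_le_tsum _
      _ ≤ ∑' n, retF P A n x :=
          Summable.tsum_le_tsum_of_inj (fun k => k + 1) (fun a b h => by simpa using h)
            (fun c _ => zero_le) (fun a => le_rfl) ENNReal.summable ENNReal.summable
      _ ≤ δ := le_biSup (retL P A) hx
  have hMb : ∀ j ∈ Finset.range i,
      ∑ k ∈ Finset.range N, ((k + 1 : ℕ) : ℝ≥0∞) ^ (i - j) * retF P A (k + 1) x ≤ M := by
    intro j hj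
    have hj' : j < i := Finset.mem_range.mp hj
    calc ∑ k ∈ Finset.range N, ((k + 1 : ℕ) : ℝ≥0∞) ^ (i - j) * retF P A (k + 1) x
        ≤ ∑ k ∈ Finset.range N, ((k + 1 : ℕ) : ℝ≥0∞) ^ ℓ * retF P A (k + 1) x :=
          Finset.sum_le_sum fun k _ => mul_le_mul_left
            (pow_le_pow_right₀ (by exact_mod_cast Nat.one_le_cast.mpr k.succ_pos)
              (by omega)) _
      _ ≤ ∑' n, ((n + 1 : ℕ) : ℝ≥0∞) ^ ℓ * retF P A (n + 1) x := ENNReal.sum_le_tsum _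
      _ ≤ M := le_biSup (fun x => ∑' n, ((n + 1 : ℕ) : ℝ≥0∞) ^ ℓ * retF P A (n + 1) x) hx
  -- main computation
  calc ∑ n ∈ Finset.range N, ((n + 1 : ℕ) : ℝ≥0∞) ^ i * iterP P (n + 1) x A
      = ∑ n ∈ Finset.range N, ∑ k ∈ Finset.range (n + 1),
          ((n + 1 : ℕ) : ℝ≥0∞) ^ i * retG P A (fun y => iterP P (n - k) y A) k x := by
        refine Finset.sum_congr rfl fun n _ => ?_
        rw [iterP_eq_sum_retG hA n x, Finset.mul_sum]
    _ = ∑ n ∈ Finset.range N, ∑ k ∈ Finset.range (n + 1),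
          ((k + (n - k) + 1 : ℕ) : ℝ≥0∞) ^ i * retG P A (fun y => iterP P (n - k) y A) k x := by
        refine Finset.sum_congr rfl fun n _ => Finset.sum_congr rfl fun k hk => ?_
        have hk' := Finset.mem_range.mp hk
        rw [show k + (n - k) + 1 = n + 1 by omega]
    _ = ∑ k ∈ Finset.range N, ∑ m ∈ Finset.range (N - k),
          ((k + m + 1 : ℕ) : ℝ≥0∞) ^ i * retG P A (fun y => iterP P m y A) k x :=
        sum_triangle
          (fun k m => ((k + m + 1 : ℕ) : ℝ≥0∞) ^ i * retG P A (fun y => iterP P m y A) k x) N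
    _ = ∑ k ∈ Finset.range N, retG P A
          (fun y => ∑ m ∈ Finset.range (N - k),
            ((k + m + 1 : ℕ) : ℝ≥0∞) ^ i * iterP P m y A) k x := by
        refine Finset.sum_congr rfl fun k _ => ?_
        rw [retG_sum_mul hA (Finset.range (N - k))
          (fun m => ((k + m + 1 : ℕ) : ℝ≥0∞) ^ i) (fun m y => iterP P m y A) hWm k x]
    _ ≤ ∑ k ∈ Finset.range N, (∑ j ∈ Finset.range (i + 1),
          (i.choose j : ℝ≥0∞) * ((k + 1 : ℕ) : ℝ≥0∞) ^ (i - j) * c j)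
          * retF P A (k + 1) x :=
        Finset.sum_le_sum fun k hk => retG_le hA (hpoint k hk) k x
    _ = ∑ j ∈ Finset.range (i + 1), (i.choose j : ℝ≥0∞) * c j *
          ∑ k ∈ Finset.range N, ((k + 1 : ℕ) : ℝ≥0∞) ^ (i - j) * retF P A (k + 1) x := by
        simp_rw [Finset.sum_mul, Finset.mul_sum]
        rw [Finset.sum_comm]
        exact Finset.sum_congr rfl fun j _ => Finset.sum_congr rfl fun k _ => by ring
    _ ≤ c i * δ + ∑ j ∈ Finset.range i, (i.choose j : ℝ≥0∞) * c j * M := by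
        rw [Finset.sum_range_succ, add_comm]
        refine add_le_add ?_ (Finset.sum_le_sum fun j hj => mul_le_mul_right (hMb j hj) _)
        have : ∑ k ∈ Finset.range N, ((k + 1 : ℕ) : ℝ≥0∞) ^ (i - i) * retF P A (k + 1) x
            = ∑ k ∈ Finset.range N, retF P A (k + 1) x := by
          refine Finset.sum_congr rfl fun k _ => ?_
          rw [Nat.sub_self, pow_zero, one_mul]
        rw [this, Nat.choose_self, Nat.cast_one, one_mul]
        exact mul_le_mul_right hδb _

end Main

theorem polynomial_return_sum_lt_top_of_first_return
    {X : Type*} [MeasurableSpace X] [MeasurableSpace.CountablyGenerated X]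
    (P : Kernel X X) (hP : ∀ x, P x Set.univ ≤ 1) (ψ : Measure X)
    (hψ : IsMaxIrreducibility P ψ) (A : Set X) (hA : InBPlus ψ A) (ℓ : ℕ) (hℓ : 1 ≤ ℓ)
    (hL : (⨆ x ∈ A, retL P A x) < 1)
    (hF : (⨆ x ∈ A, ∑' n, ((n + 1 : ℕ) : ℝ≥0∞) ^ ℓ * retF P A (n + 1) x) < ⊤) :
    (⨆ x ∈ A, ∑' n, ((n + 1 : ℕ) : ℝ≥0∞) ^ ℓ * iterP P (n + 1) x A) < ⊤ := by
  haveI : IsFiniteKernel P := ⟨⟨1, ENNReal.one_lt_top, hP⟩⟩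
  obtain ⟨hAm, -⟩ := hA
  set δ := ⨆ x ∈ A, retL P A x with hδdef
  set M := ⨆ x ∈ A, ∑' n, ((n + 1 : ℕ) : ℝ≥0∞) ^ ℓ * retF P A (n + 1) x with hMdef
  have hδ1 : δ < 1 := hL
  have hδt : δ ≠ ⊤ := ne_top_of_le_ne_top ENNReal.one_ne_top hδ1.le
  have hM : M ≠ ⊤ := hF.ne
  have h1δ : (1 : ℝ≥0∞) - δ ≠ 0 := by
    simp only [ne_eq, tsub_eq_zero_iff_le]; exact hδ1.not_ge
  have hTfin : ∀ i N, Tsum P A i N ≠ ⊤ := by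
    intro i N
    have h1 : Tsum P A i N ≤ ∑ n ∈ Finset.range N, ((n + 1 : ℕ) : ℝ≥0∞) ^ i :=
      iSup₂_le fun x hx => Finset.sum_le_sum fun n _ => by
        calc ((n + 1 : ℕ) : ℝ≥0∞) ^ i * iterP P (n + 1) x A
            ≤ ((n + 1 : ℕ) : ℝ≥0∞) ^ i * 1 := mul_le_mul_right (iterP_le_one hP _ _) _
          _ = ((n + 1 : ℕ) : ℝ≥0∞) ^ i := mul_one _
    refine ne_top_of_le_ne_top ?_ h1
    exact (ENNReal.sum_lt_top.mpr fun n _ =>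
      ENNReal.pow_lt_top (ENNReal.natCast_lt_top _)).ne
  have claim : ∀ i, i ≤ ℓ → ∃ C : ℝ≥0∞, C ≠ ⊤ ∧ ∀ N, Tsum P A i N ≤ C := by
    intro i
    induction i using Nat.strong_induction_on with
    | _ i IH =>
      intro hi
      have hC : ∀ j : ℕ, ∃ Cj : ℝ≥0∞, Cj ≠ ⊤ ∧ (j < i → ∀ N, Tsum P A j N ≤ Cj) := by
        intro j
        by_cases h : j < i
        · obtain ⟨Cj, h1, h2⟩ := IH j h (by omega)
          exact ⟨Cj, h1, fun _ => h2⟩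
        · exact ⟨0, by simp, fun h' => absurd h' h⟩
      choose C hC1 hC2 using hC
      set K := δ + ∑ j ∈ Finset.range i, (i.choose j : ℝ≥0∞) * (1 + C j) * M with hK
      have hKt : K ≠ ⊤ := by
        rw [hK]
        refine ENNReal.add_ne_top.mpr ⟨hδt, ?_⟩
        refine (ENNReal.sum_lt_top.mpr fun j _ => ?_).ne
        refine ENNReal.mul_lt_top (ENNReal.mul_lt_top ?_ ?_) hM.lt_top
        · exact ENNReal.natCast_lt_top _
        · exact ENNReal.add_lt_top.mpr ⟨ENNReal.one_lt_top, (hC1 j).lt_top⟩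
      refine ⟨K / (1 - δ), ?_, fun N => ?_⟩
      · exact (ENNReal.div_lt_top hKt h1δ).ne
      · refine ennreal_solve hδ1 (hTfin i N) ?_
        refine le_trans (key_bound hAm ℓ i N hi) ?_
        have e1 : ((if i = 0 then (1 : ℝ≥0∞) else 0) + Tsum P A i N) * δ
            ≤ δ + δ * Tsum P A i N := by
          rw [add_mul]
          refine add_le_add ?_ (le_of_eq (mul_comm _ _))
          split
          · rw [one_mul]
          · rw [zero_mul]; exact zero_le
        have e2 : ∑ j ∈ Finset.range i, (i.choose j : ℝ≥0∞)
              * ((if j = 0 then 1 else 0) + Tsum P A j N) * M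
            ≤ ∑ j ∈ Finset.range i, (i.choose j : ℝ≥0∞) * (1 + C j) * M := by
          refine Finset.sum_le_sum fun j hj => ?_
          refine mul_le_mul_left (mul_le_mul_right (add_le_add ?_
            (hC2 j (Finset.mem_range.mp hj) N)) _) _
          split
          · exact le_rfl
          · exact zero_le
        calc ((if i = 0 then (1 : ℝ≥0∞) else 0) + Tsum P A i N) * δ
              + ∑ j ∈ Finset.range i, (i.choose j : ℝ≥0∞)
                * ((if j = 0 then 1 else 0) + Tsum P A j N) * M
            ≤ (δ + δ * Tsum P A i N)
              + ∑ j ∈ Finset.range i, (i.choose j : ℝ≥0∞) * (1 + C j) * M :=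
              add_le_add e1 e2
          _ = δ * Tsum P A i N + K := by rw [hK]; ring
  obtain ⟨C, hC1, hC2⟩ := claim ℓ le_rfl
  refine lt_of_le_of_lt (iSup₂_le fun x hx => ?_) hC1.lt_top
  rw [ENNReal.tsum_eq_iSup_nat]
  refine iSup_le fun N => ?_
  exact le_trans (le_biSup
    (fun x => ∑ n ∈ Finset.range N, ((n + 1 : ℕ) : ℝ≥0∞) ^ ℓ * iterP P (n + 1) x A) hx)
    (hC2 N)

end MarkovTransience
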